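/- Let q(x) = (1/(2α))‖x − z‖²_D with α > 0, D symmetric positive definite, and ε ≥ 0. Then ∂_ε q(x) = { (1/α) D (x − z + e) : e ∈ ℝⁿ, ‖e‖²_D ≤ 2αε }. -/

import Mathlib

open Matrix

theorem stmt14 {n : ℕ} (α ε : ℝ) (hα : 0 < α) (hε : 0 ≤ ε)
    (D : Matrix (Fin n) (Fin n) ℝ) (hsymm : D.IsSymm) (hpd : D.PosDef)
    (z x : Fin n → ℝ)
    (q : (Fin n → ℝ) → ℝ)
    (hq : ∀ y : Fin n → ℝ, q y = 1 / (2 * α) * ((y - z) ⬝ᵥ D.mulVec (y - z))) :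
    {v : Fin n → ℝ | ∀ y : Fin n → ℝ, q x + v ⬝ᵥ (y - x) - ε ≤ q y} =
      {w : Fin n → ℝ | ∃ e : Fin n → ℝ,
        e ⬝ᵥ D.mulVec e ≤ 2 * α * ε ∧ w = (1 / α) • D.mulVec (x - z + e)} := by
  have hα' : α ≠ 0 := hα.ne'
  have h2α : (0:ℝ) < 2 * α := by linarith
  have hc : 2 * α * (1 / (2 * α)) = 1 := by field_simp
  have hhalf : 1 / (2 * α) = 1 / 2 * (1 / α) := by
    rw [one_div, mul_inv, one_div, one_div]
  have hsym : ∀ a b : Fin n → ℝ, a ⬝ᵥ D.mulVec b = b ⬝ᵥ D.mulVec a := by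
    intro a b
    rw [Matrix.dotProduct_mulVec, ← Matrix.mulVec_transpose, hsymm.eq,
      dotProduct_comm]
  have hpsd := hpd.posSemidef
  ext v
  simp only [Set.mem_setOf_eq]
  constructor
  · intro h
    have hdet : IsUnit D.det := isUnit_iff_ne_zero.mpr hpd.det_pos.ne'
    set a : Fin n → ℝ := x - z with ha
    set e : Fin n → ℝ := α • (D⁻¹.mulVec v) - a with he
    have hDe : D.mulVec e = α • v - D.mulVec a := by
      rw [he, Matrix.mulVec_sub, Matrix.mulVec_smul, Matrix.mulVec_mulVec,
        Matrix.mul_nonsing_inv D hdet, Matrix.one_mulVec]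
    have hv : v = (1 / α) • D.mulVec (x - z + e) := by
      rw [Matrix.mulVec_add, ← ha, hDe,
        show D.mulVec a + (α • v - D.mulVec a) = α • v by abel,
        smul_smul, one_div, inv_mul_cancel₀ hα', one_smul]
    refine ⟨e, ?_, hv⟩
    have h1 := h (x + e)
    rw [hq, hq] at h1
    have hxz : x + e - z = a + e := by rw [ha]; abel
    have hxx : x + e - x = e := by abel
    rw [hxz, hxx, ← ha, hv] at h1
    have hexp : (a + e) ⬝ᵥ D.mulVec (a + e) =
        a ⬝ᵥ D.mulVec a + 2 * (a ⬝ᵥ D.mulVec e) + e ⬝ᵥ D.mulVec e := by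
      simp only [Matrix.mulVec_add, dotProduct_add, add_dotProduct]
      linear_combination hsym e a
    have hve : ((1 / α) • D.mulVec (x - z + e)) ⬝ᵥ e =
        (1 / α) * (a ⬝ᵥ D.mulVec e + e ⬝ᵥ D.mulVec e) := by
      rw [← ha]
      simp only [smul_dotProduct, Matrix.mulVec_add,
        add_dotProduct, smul_eq_mul]
      linear_combination (1 / α) * dotProduct_comm (D.mulVec a) e +
        (1 / α) * hsym e a + (1 / α) * dotProduct_comm (D.mulVec e) e
    rw [hexp, hve, hhalf] at h1
    have h3 : 1 / 2 * (1 / α) * (e ⬝ᵥ D.mulVec e) ≤ ε := by linarith [h1]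
    have h5 : 2 * α * (1 / 2 * (1 / α) * (e ⬝ᵥ D.mulVec e)) = e ⬝ᵥ D.mulVec e := by
      field_simp
    have h6 := mul_le_mul_of_nonneg_left h3 h2α.le
    linarith [h6, h5]
  · rintro ⟨e, hee, rfl⟩
    intro y
    rw [hq, hq]
    set a : Fin n → ℝ := x - z with ha
    set u : Fin n → ℝ := y - x with hu
    have hyz : y - z = a + u := by rw [ha, hu]; abel
    rw [hyz]
    have hexp : (a + u) ⬝ᵥ D.mulVec (a + u) =
        a ⬝ᵥ D.mulVec a + 2 * (a ⬝ᵥ D.mulVec u) + u ⬝ᵥ D.mulVec u := by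
      simp only [Matrix.mulVec_add, dotProduct_add, add_dotProduct]
      linear_combination hsym u a
    have hvu : ((1 / α) • D.mulVec (a + e)) ⬝ᵥ u =
        (1 / α) * (a ⬝ᵥ D.mulVec u + e ⬝ᵥ D.mulVec u) := by
      simp only [smul_dotProduct, Matrix.mulVec_add,
        add_dotProduct, smul_eq_mul]
      linear_combination (1 / α) * dotProduct_comm (D.mulVec a) u +
        (1 / α) * hsym u a + (1 / α) * dotProduct_comm (D.mulVec e) u +
        (1 / α) * hsym u e
    have hsq : 0 ≤ (u - e) ⬝ᵥ D.mulVec (u - e) := hpsd.dotProduct_mulVec_nonneg (u - e)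
    have hsqexp : (u - e) ⬝ᵥ D.mulVec (u - e) =
        u ⬝ᵥ D.mulVec u - 2 * (e ⬝ᵥ D.mulVec u) + e ⬝ᵥ D.mulVec e := by
      simp only [Matrix.mulVec_sub, dotProduct_sub, sub_dotProduct]
      linear_combination -hsym u e
    rw [hexp, hvu, hhalf]
    rw [hsqexp] at hsq
    have hnn : (0:ℝ) ≤ 1 / 2 * (1 / α) := by positivity
    have hle : 1 / 2 * (1 / α) * (e ⬝ᵥ D.mulVec e) ≤ ε := by
      have h4 := mul_le_mul_of_nonneg_left hee hnn
      have h6 : 1 / 2 * (1 / α) * (2 * α * ε) = ε := by field_simp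
      linarith [h4, h6]
    have hpos : (0:ℝ) ≤ 1 / 2 * (1 / α) * (u ⬝ᵥ D.mulVec u - 2 * (e ⬝ᵥ D.mulVec u)
        + e ⬝ᵥ D.mulVec e) := mul_nonneg hnn hsq
    linarith [hpos, hle]
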